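/- Let c > 0 and A > 0, and let f, g : ℝ → ℝ be twice continuously differentiable on [−A, A]. Suppose that for every h ∈ [−A, A] one has f″(h) < c²·f(h) and g″(h) = c²·g(h), and that f(0) = g(0), f′(0) = 0, and g′(0) = 0. Then f(h) < g(h) for every h ∈ [−A, A] with h ≠ 0. -/

import Mathlib

open Set

/-- ODE comparison for length functions: if `f″ < c²·f` and `g″ = c²·g` on
`[−A,A]`, with `f(0) = g(0)` and `f′(0) = g′(0) = 0`, then `f < g` away
from `0`. -/
theorem stmt_15 (c A : ℝ) (hc : 0 < c) (hA : 0 < A) (f g : ℝ → ℝ)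
    (hf : ContDiffOn ℝ 2 f (Icc (-A) A))
    (hg : ContDiffOn ℝ 2 g (Icc (-A) A))
    (hf'' : ∀ h ∈ Icc (-A) A,
      derivWithin (derivWithin f (Icc (-A) A)) (Icc (-A) A) h < c ^ 2 * f h)
    (hg'' : ∀ h ∈ Icc (-A) A,
      derivWithin (derivWithin g (Icc (-A) A)) (Icc (-A) A) h = c ^ 2 * g h)
    (h0 : f 0 = g 0)
    (hf0' : derivWithin f (Icc (-A) A) 0 = 0)
    (hg0' : derivWithin g (Icc (-A) A) 0 = 0) :
    ∀ h ∈ Icc (-A) A, h ≠ 0 → f h < g h := by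
  set I : Set ℝ := Icc (-A) A with hIdef
  have hAA : (-A : ℝ) < A := by linarith
  have hIu : UniqueDiffOn ℝ I := uniqueDiffOn_Icc hAA
  have h0I : (0 : ℝ) ∈ I := ⟨by linarith, le_of_lt hA⟩
  set f1 : ℝ → ℝ := derivWithin f I with hf1def
  set g1 : ℝ → ℝ := derivWithin g I with hg1def
  have hf1 : ContDiffOn ℝ 1 f1 I := hf.derivWithin hIu (by norm_num)
  have hg1 : ContDiffOn ℝ 1 g1 I := hg.derivWithin hIu (by norm_num)
  have hfd : DifferentiableOn ℝ f I := hf.differentiableOn (by norm_num)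
  have hgd : DifferentiableOn ℝ g I := hg.differentiableOn (by norm_num)
  have hf1d : DifferentiableOn ℝ f1 I := hf1.differentiableOn one_ne_zero
  have hg1d : DifferentiableOn ℝ g1 I := hg1.differentiableOn one_ne_zero
  set w : ℝ → ℝ := fun t => g t - f t with hwdef
  set w1 : ℝ → ℝ := fun t => g1 t - f1 t with hw1def
  set W2 : ℝ → ℝ := fun t => derivWithin g1 I t - derivWithin f1 I t with hW2def
  -- derivatives at interior points
  have hmem : ∀ x ∈ Ioo (-A) A, I ∈ nhds x := fun x hx => Icc_mem_nhds hx.1 hx.2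
  have hIoosub : Ioo (-A) A ⊆ I := Ioo_subset_Icc_self
  have hwD : ∀ x ∈ Ioo (-A) A, HasDerivAt w (w1 x) x := by
    intro x hx
    exact (((hgd x (hIoosub hx)).hasDerivWithinAt.hasDerivAt (hmem x hx)).sub
      ((hfd x (hIoosub hx)).hasDerivWithinAt.hasDerivAt (hmem x hx)))
  have hw1D : ∀ x ∈ Ioo (-A) A, HasDerivAt w1 (W2 x) x := by
    intro x hx
    exact (((hg1d x (hIoosub hx)).hasDerivWithinAt.hasDerivAt (hmem x hx)).sub
      ((hf1d x (hIoosub hx)).hasDerivWithinAt.hasDerivAt (hmem x hx)))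
  have hW2 : ∀ x ∈ I, c ^ 2 * w x < W2 x := by
    intro x hx
    have h1 := hf'' x hx
    have h2 := hg'' x hx
    simp only [hW2def, hwdef]
    rw [h2]
    nlinarith
  -- the two auxiliary functions
  set φ : ℝ → ℝ := fun t => Real.exp (c * t) * (w1 t - c * w t) with hφdef
  set ψ : ℝ → ℝ := fun t => Real.exp (-(c * t)) * (w1 t + c * w t) with hψdef
  have hφD : ∀ x ∈ Ioo (-A) A,
      HasDerivAt φ (Real.exp (c * x) * (W2 x - c ^ 2 * w x)) x := by
    intro x hx
    have he : HasDerivAt (fun t => Real.exp (c * t)) (Real.exp (c * x) * c) x := by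
      simpa using ((hasDerivAt_id x).const_mul c).exp
    have hin : HasDerivAt (fun t => w1 t - c * w t) (W2 x - c * w1 x) x :=
      (hw1D x hx).sub ((hwD x hx).const_mul c)
    have : HasDerivAt (fun t => Real.exp (c * t) * (w1 t - c * w t)) _ x := he.mul hin
    convert this using 1
    ring
  have hψD : ∀ x ∈ Ioo (-A) A,
      HasDerivAt ψ (Real.exp (-(c * x)) * (W2 x - c ^ 2 * w x)) x := by
    intro x hx
    have he : HasDerivAt (fun t => Real.exp (-(c * t))) (Real.exp (-(c * x)) * (-c)) x := by
      simpa using (((hasDerivAt_id x).const_mul c).neg).exp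
    have hin : HasDerivAt (fun t => w1 t + c * w t) (W2 x + c * w1 x) x :=
      (hw1D x hx).add ((hwD x hx).const_mul c)
    have : HasDerivAt (fun t => Real.exp (-(c * t)) * (w1 t + c * w t)) _ x := he.mul hin
    convert this using 1
    ring
  have hwcont : ContinuousOn w I := hg.continuousOn.sub hf.continuousOn
  have hw1cont : ContinuousOn w1 I := hg1.continuousOn.sub hf1.continuousOn
  have hexc : Continuous fun t : ℝ => Real.exp (c * t) :=
    Real.continuous_exp.comp (continuous_const.mul continuous_id)
  have hexc' : Continuous fun t : ℝ => Real.exp (-(c * t)) :=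
    Real.continuous_exp.comp (continuous_const.mul continuous_id).neg
  have hφcont : ContinuousOn φ I :=
    hexc.continuousOn.mul (hw1cont.sub (continuousOn_const.mul hwcont))
  have hψcont : ContinuousOn ψ I :=
    hexc'.continuousOn.mul (hw1cont.add (continuousOn_const.mul hwcont))
  have hφmono : StrictMonoOn φ I := by
    apply strictMonoOn_of_deriv_pos (convex_Icc _ _) hφcont
    intro x hx
    rw [interior_Icc] at hx
    rw [(hφD x hx).deriv]
    exact mul_pos (Real.exp_pos _) (by linarith [hW2 x (hIoosub hx)])
  have hψmono : StrictMonoOn ψ I := by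
    apply strictMonoOn_of_deriv_pos (convex_Icc _ _) hψcont
    intro x hx
    rw [interior_Icc] at hx
    rw [(hψD x hx).deriv]
    exact mul_pos (Real.exp_pos _) (by linarith [hW2 x (hIoosub hx)])
  have hw0 : w 0 = 0 := by simp [hwdef, h0]
  have hw10 : w1 0 = 0 := by
    simp only [hw1def]
    rw [hg0', hf0', sub_zero]
  have hφ0 : φ 0 = 0 := by simp [hφdef, hw0, hw10]
  have hψ0 : ψ 0 = 0 := by simp [hψdef, hw0, hw10]
  -- w1 positive on (0,A), negative on (-A,0)
  have hw1pos : ∀ x ∈ Ioo (0 : ℝ) A, 0 < w1 x := by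
    intro x hx
    have hxI : x ∈ I := ⟨by linarith [hx.1], le_of_lt hx.2⟩
    have h1 : 0 < φ x := by
      have := hφmono h0I hxI hx.1
      rwa [hφ0] at this
    have h2 : 0 < ψ x := by
      have := hψmono h0I hxI hx.1
      rwa [hψ0] at this
    have e1 : 0 < w1 x - c * w x := by
      by_contra hcon
      push_neg at hcon
      have : φ x ≤ 0 :=
        mul_nonpos_of_nonneg_of_nonpos (le_of_lt (Real.exp_pos _)) hcon
      linarith
    have e2 : 0 < w1 x + c * w x := by
      by_contra hcon
      push_neg at hcon
      have : ψ x ≤ 0 :=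
        mul_nonpos_of_nonneg_of_nonpos (le_of_lt (Real.exp_pos _)) hcon
      linarith
    linarith
  have hw1neg : ∀ x ∈ Ioo (-A) (0 : ℝ), w1 x < 0 := by
    intro x hx
    have hxI : x ∈ I := ⟨le_of_lt hx.1, by linarith [hx.2]⟩
    have h1 : φ x < 0 := by
      have := hφmono hxI h0I hx.2
      rwa [hφ0] at this
    have h2 : ψ x < 0 := by
      have := hψmono hxI h0I hx.2
      rwa [hψ0] at this
    have e1 : w1 x - c * w x < 0 := by
      by_contra hcon
      push_neg at hcon
      have : 0 ≤ φ x := mul_nonneg (le_of_lt (Real.exp_pos _)) hcon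
      linarith
    have e2 : w1 x + c * w x < 0 := by
      by_contra hcon
      push_neg at hcon
      have : 0 ≤ ψ x := mul_nonneg (le_of_lt (Real.exp_pos _)) hcon
      linarith
    linarith
  -- conclude by monotonicity of w on each side
  have hwmono : StrictMonoOn w (Icc (0 : ℝ) A) := by
    apply strictMonoOn_of_deriv_pos (convex_Icc _ _)
      (hwcont.mono (Icc_subset_Icc (by linarith) le_rfl))
    intro x hx
    rw [interior_Icc] at hx
    have hx' : x ∈ Ioo (-A) A := ⟨by linarith [hx.1], hx.2⟩
    rw [(hwD x hx').deriv]
    exact hw1pos x hx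
  have hwanti : StrictAntiOn w (Icc (-A) (0 : ℝ)) := by
    apply strictAntiOn_of_deriv_neg (convex_Icc _ _)
      (hwcont.mono (Icc_subset_Icc le_rfl (by linarith)))
    intro x hx
    rw [interior_Icc] at hx
    have hx' : x ∈ Ioo (-A) A := ⟨hx.1, by linarith [hx.2]⟩
    rw [(hwD x hx').deriv]
    exact hw1neg x hx
  intro h hh hne
  have : 0 < w h := by
    rcases lt_or_gt_of_ne hne with hlt | hgt
    · have := hwanti (⟨hh.1, le_of_lt hlt⟩ : h ∈ Icc (-A) (0:ℝ))
        (⟨by linarith, le_rfl⟩ : (0:ℝ) ∈ Icc (-A) (0:ℝ)) hlt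
      rwa [hw0] at this
    · have := hwmono (⟨le_rfl, le_of_lt hA⟩ : (0:ℝ) ∈ Icc (0:ℝ) A)
        (⟨le_of_lt hgt, hh.2⟩ : h ∈ Icc (0:ℝ) A) hgt
      rwa [hw0] at this
  simpa [hwdef] using this
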